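/- Let Γ be a sub-semigroup of GL(d,ℝ) that is strongly irreducible and contains a proximal element. If Γ is unbounded, then every nonzero vector v ∈ ℝ^d has unbounded Γ-orbit. (Equivalently: the subspace W of vectors with bounded Γ-orbit is Γ-invariant, hence by strong irreducibility W = {0} or W = V, and W = V would force Γ bounded.) -/

import Mathlib

open Matrix

def HasCEig (d : ℕ) (γ : Matrix (Fin d) (Fin d) ℝ) (μ : ℂ) : Prop :=
  ∃ w : Fin d → ℂ, w ≠ 0 ∧ (γ.map (fun r : ℝ => (r : ℂ))).mulVec w = μ • w

/-- A proximal matrix: it has a real eigenvalue `lam` whose modulus strictly dominates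
the modulus of every other (complex) eigenvalue. -/
def IsProximal (d : ℕ) (γ : Matrix (Fin d) (Fin d) ℝ) : Prop :=
  ∃ (lam : ℝ) (v : Fin d → ℝ), v ≠ 0 ∧ γ.mulVec v = lam • v ∧
    ∀ μ : ℂ, HasCEig d γ μ → μ ≠ (lam : ℂ) → ‖μ‖ < |lam|

def StronglyIrred (d : ℕ) (Γ : Set (Matrix (Fin d) (Fin d) ℝ)) : Prop :=
  ¬ ∃ (n : ℕ) (W : Fin (n + 1) → Submodule ℝ (Fin d → ℝ)),
      (∀ i, W i ≠ ⊥) ∧ (∀ i, W i ≠ ⊤) ∧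
      ∀ γ ∈ Γ, ∀ v ∈ ⋃ i, (W i : Set (Fin d → ℝ)),
        γ.mulVec v ∈ ⋃ i, (W i : Set (Fin d → ℝ))

noncomputable def opn (d : ℕ) (g : Matrix (Fin d) (Fin d) ℝ) : ℝ :=
  ‖Matrix.toEuclideanCLM (𝕜 := ℝ) g‖

/-- coordinates are bounded by the Euclidean norm -/
lemma coord_le_enorm {d : ℕ} (x : EuclideanSpace ℝ (Fin d)) (i : Fin d) :
    ‖x i‖ ≤ ‖x‖ := by
  calc ‖x i‖ = Real.sqrt (‖x i‖ ^ 2) := (Real.sqrt_sq (norm_nonneg _)).symm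
    _ ≤ Real.sqrt (∑ j, ‖x j‖ ^ 2) :=
        Real.sqrt_le_sqrt (Finset.single_le_sum (f := fun j => ‖x j‖ ^ 2) (fun j _ => sq_nonneg _) (Finset.mem_univ i))
    _ = ‖x‖ := (EuclideanSpace.norm_eq x).symm

/-- If all entries of `g` are bounded by `C ≥ 0`, the l2 operator norm is at most `d*(d*C)`. -/
lemma opn_le_of_entries {d : ℕ} (g : Matrix (Fin d) (Fin d) ℝ) (C : ℝ) (hC : 0 ≤ C)
    (h : ∀ j i, |g j i| ≤ C) : opn d g ≤ (d : ℝ) * ((d : ℝ) * C) := by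
  have hdd : (d : ℝ) ≤ (d : ℝ) * (d : ℝ) := by
    have : d ≤ d * d := by
      cases d with
      | zero => simp
      | succ n => exact Nat.le_mul_of_pos_left _ (Nat.succ_pos n)
    exact_mod_cast this
  apply ContinuousLinearMap.opNorm_le_bound _ (by positivity)
  intro x
  set y : EuclideanSpace ℝ (Fin d) := Matrix.toEuclideanCLM (𝕜 := ℝ) g x with hy
  have hyj : ∀ j, y j = ∑ i, g j i * x i := by
    intro j
    have h := Matrix.ofLp_toEuclideanCLM (n := Fin d) (𝕜 := ℝ) g x
    calc y j = (WithLp.equiv 2 (Fin d → ℝ) y) j := rfl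
      _ = (Matrix.toLin' g (WithLp.equiv 2 (Fin d → ℝ) x)) j := rfl
      _ = ∑ i, g j i * x i := by
          simp [Matrix.toLin'_apply, Matrix.mulVec, dotProduct]
  set B : ℝ := (d : ℝ) * (C * ‖x‖) with hB
  have hB0 : 0 ≤ B := by positivity
  have hcoord : ∀ j, ‖y j‖ ≤ B := by
    intro j
    rw [hyj j, Real.norm_eq_abs]
    calc |∑ i, g j i * x i| ≤ ∑ i, |g j i * x i| := Finset.abs_sum_le_sum_abs _ _
      _ ≤ ∑ _i : Fin d, C * ‖x‖ := by
          apply Finset.sum_le_sum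
          intro i _
          rw [abs_mul]
          exact mul_le_mul (h j i) (coord_le_enorm x i) (abs_nonneg _) hC
      _ = B := by simp [hB, Finset.sum_const, mul_comm]
  have hnorm : ‖y‖ ≤ (d : ℝ) * B := by
    calc ‖y‖ = Real.sqrt (∑ j, ‖y j‖ ^ 2) := EuclideanSpace.norm_eq y
      _ ≤ Real.sqrt (∑ _j : Fin d, B ^ 2) := by
          apply Real.sqrt_le_sqrt
          exact Finset.sum_le_sum fun j _ => pow_le_pow_left₀ (norm_nonneg _) (hcoord j) 2
      _ = Real.sqrt ((d : ℝ) * B ^ 2) := by simp [Finset.sum_const, nsmul_eq_mul]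
      _ ≤ Real.sqrt (((d : ℝ) * B) ^ 2) := by
          apply Real.sqrt_le_sqrt
          have := mul_le_mul_of_nonneg_right hdd (sq_nonneg B)
          nlinarith
      _ = (d : ℝ) * B := Real.sqrt_sq (by positivity)
  calc ‖y‖ ≤ (d : ℝ) * B := hnorm
    _ = (d : ℝ) * ((d : ℝ) * C) * ‖x‖ := by rw [hB]; ring

/-- If a strongly irreducible sub-semigroup `Γ ⊆ GL(d,ℝ)` containing a proximal element
is unbounded, then every nonzero vector has unbounded `Γ`-orbit. -/
theorem stmt2 (d : ℕ) (Γ : Set (Matrix (Fin d) (Fin d) ℝ))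
    (hmul : ∀ a ∈ Γ, ∀ b ∈ Γ, a * b ∈ Γ)
    (hunit : ∀ g ∈ Γ, IsUnit g)
    (hirr : StronglyIrred d Γ)
    (hprox : ∃ γ ∈ Γ, IsProximal d γ)
    (hunb : ¬ ∃ C : ℝ, ∀ g ∈ Γ, opn d g ≤ C) :
    ∀ v : Fin d → ℝ, v ≠ 0 →
      ¬ ∃ C : ℝ, ∀ γ ∈ Γ, ‖γ.mulVec v‖ ≤ C := by
  intro v hv hbdd
  -- the submodule of vectors with bounded orbit
  set W : Submodule ℝ (Fin d → ℝ) :=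
    { carrier := {x | ∃ C : ℝ, ∀ γ ∈ Γ, ‖γ.mulVec x‖ ≤ C}
      add_mem' := by
        rintro a b ⟨Ca, ha⟩ ⟨Cb, hb⟩
        refine ⟨Ca + Cb, fun γ hγ => ?_⟩
        calc ‖γ.mulVec (a + b)‖ = ‖γ.mulVec a + γ.mulVec b‖ := by rw [Matrix.mulVec_add]
          _ ≤ ‖γ.mulVec a‖ + ‖γ.mulVec b‖ := norm_add_le _ _
          _ ≤ Ca + Cb := add_le_add (ha γ hγ) (hb γ hγ)
      zero_mem' := ⟨0, fun γ _ => by simp [Matrix.mulVec_zero]⟩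
      smul_mem' := by
        rintro c a ⟨Ca, ha⟩
        refine ⟨|c| * Ca, fun γ hγ => ?_⟩
        rw [Matrix.mulVec_smul, norm_smul, Real.norm_eq_abs]
        exact mul_le_mul_of_nonneg_left (ha γ hγ) (abs_nonneg c) } with hWdef
  have hmem : ∀ x : Fin d → ℝ, x ∈ W ↔ ∃ C : ℝ, ∀ γ ∈ Γ, ‖γ.mulVec x‖ ≤ C := fun x => Iff.rfl
  have hvW : v ∈ W := (hmem v).mpr hbdd
  -- W is Γ-invariant
  have hinv : ∀ γ ∈ Γ, ∀ x ∈ W, γ.mulVec x ∈ W := by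
    intro γ hγ x hx
    obtain ⟨C, hC⟩ := (hmem x).mp hx
    refine (hmem _).mpr ⟨C, fun g hg => ?_⟩
    rw [Matrix.mulVec_mulVec]
    exact hC _ (hmul g hg γ hγ)
  -- W ≠ ⊥
  have hbot : W ≠ ⊥ := by
    intro h
    exact hv (by simpa [h] using hvW)
  -- W ≠ ⊤ (otherwise Γ would be bounded)
  have htop : W ≠ ⊤ := by
    intro htop
    apply hunb
    have hall : ∀ i : Fin d, ∃ C : ℝ, ∀ γ ∈ Γ, ‖γ.mulVec (Pi.single i 1)‖ ≤ C := by
      intro i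
      exact (hmem _).mp (htop ▸ Submodule.mem_top)
    choose Cf hCf using hall
    set C : ℝ := ∑ k, |Cf k| with hCdef
    have hC0 : 0 ≤ C := Finset.sum_nonneg fun k _ => abs_nonneg _
    refine ⟨(d : ℝ) * ((d : ℝ) * C), fun g hg => ?_⟩
    apply opn_le_of_entries g C hC0
    intro j i
    calc |g j i| = ‖(g.mulVec (Pi.single i 1)) j‖ := by
          simp [Matrix.mulVec_single, Real.norm_eq_abs]
      _ ≤ ‖g.mulVec (Pi.single i 1)‖ := norm_le_pi_norm _ j
      _ ≤ Cf i := hCf i g hg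
      _ ≤ C := le_trans (le_abs_self _)
          (Finset.single_le_sum (f := fun k => |Cf k|) (fun k _ => abs_nonneg _) (Finset.mem_univ i))
  -- contradiction with strong irreducibility
  apply hirr
  refine ⟨0, fun _ => W, fun _ => hbot, fun _ => htop, ?_⟩
  intro γ hγ x hx
  simp only [Set.mem_iUnion, SetLike.mem_coe] at hx ⊢
  obtain ⟨_, hx⟩ := hx
  exact ⟨0, hinv γ hγ x hx⟩
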